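/- Let G be a connected solvable affine algebraic group acting on a smooth projective variety X, and assume every effective cycle on X is rationally equivalent to a G-invariant effective cycle. Let E be a reflexive sheaf with P_X(E)=0. If δ_k P_V(E) > 0 for every G-invariant subvariety V of dimension k for all 1 ≤ k ≤ n-1, then δ_k P_V(E) > 0 for every subvariety V of dimension k, 1 ≤ k ≤ n-1. In other words, equivariant P_δ-positivity implies P_δ-positivity. -/
import Mathlib


/-- Equivariant `P_δ`-positivity implies `P_δ`-positivity.  Subvarieties of the
smooth projective `G`-variety `X` (with `G` connected solvable affine acting regularly) are
abstracted to a type `Var` with a dimension function `dimV` and a `G`-invariance predicate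
`Inv`; `P V = P_V(E)` for the reflexive sheaf `E` with `P_X(E) = 0` (hypothesis `hPX`).
By Brion's theorem, every subvariety `V` is rationally equivalent to a nonempty positive
combination of `G`-invariant subvarieties of the same dimension, and `P_•(E)` is additive on
such decompositions (hypothesis `hBrion`).  If `δ_k P_V(E) > 0` for every `G`-invariant `V`
with `1 ≤ dim V ≤ n-1`, then the same holds for every subvariety `V`. -/
theorem stmt1 (n : ℕ) {Var : Type*} (dimV : Var → ℕ) (Inv : Var → Prop)
    (P : Var → ℝ) (δ : ℕ → ℝ) (hδ : ∀ k, δ k = 1 ∨ δ k = -1)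
    (PX : ℝ) (hPX : PX = 0)
    (hBrion : ∀ V : Var, ∃ (m : ℕ) (a : Fin m → ℝ) (W : Fin m → Var),
      0 < m ∧ (∀ i, 0 < a i) ∧ (∀ i, Inv (W i)) ∧ (∀ i, dimV (W i) = dimV V) ∧
      P V = ∑ i, a i * P (W i))
    (hequiv : ∀ V, Inv V → 1 ≤ dimV V → dimV V ≤ n - 1 → 0 < δ (dimV V) * P V) :
    ∀ V, 1 ≤ dimV V → dimV V ≤ n - 1 → 0 < δ (dimV V) * P V := by
  intro V h1 h2
  obtain ⟨m, a, W, hm, ha, hInv, hdim, hP⟩ := hBrion V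
  rw [hP, Finset.mul_sum]
  have : ∀ i ∈ Finset.univ, 0 < δ (dimV V) * (a i * P (W i)) := by
    intro i _
    have h := hequiv (W i) (hInv i) (by rw [hdim i]; exact h1) (by rw [hdim i]; exact h2)
    rw [hdim i] at h
    have := mul_pos (ha i) h
    nlinarith
  exact Finset.sum_pos this (by simpa [Finset.univ_nonempty_iff, Fin.pos_iff_nonempty] using hm)
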